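/- Fix n ≥ 1 and let w_0 be the longest element of S_n (the order-reversing permutation w_0(i) = n + 1 − i). Then σ_{w_0}(w_0) equals the product of all positive roots: σ_{w_0}(w_0) = ∏_{1 ≤ a < b ≤ n} (t_a − t_b). -/

import Mathlib

open Equiv MvPolynomial

/-- The adjacent transposition `s_i = (i, i+1)` in `S_n` (defined to be `1` if `i+1 ≥ n`). -/
def simpleRefl (n : ℕ) (i : ℕ) : Equiv.Perm (Fin n) :=
  if h : i + 1 < n then Equiv.swap ⟨i, Nat.lt_of_succ_lt h⟩ ⟨i + 1, h⟩ else 1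

/-- A word is a list of indices `i` with `i + 1 < n` (0-indexed version of `1 ≤ i ≤ n-1`). -/
def IsWord (n : ℕ) (l : List ℕ) : Prop := ∀ b ∈ l, b + 1 < n

/-- The product `s_{b_1} ⋯ s_{b_m}` of the simple reflections of a word. -/
def wordProd (n : ℕ) (l : List ℕ) : Equiv.Perm (Fin n) := (l.map (simpleRefl n)).prod

/-- `l` is a reduced word for `w`: its product is `w` and no shorter word has product `w`. -/
def IsReducedWord (n : ℕ) (w : Equiv.Perm (Fin n)) (l : List ℕ) : Prop :=
  IsWord n l ∧ wordProd n l = w ∧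
    ∀ l' : List ℕ, IsWord n l' → wordProd n l' = w → l.length ≤ l'.length

/-- The Coxeter length `ℓ(w)`: the length of any reduced word for `w`. -/
noncomputable def coxLen (n : ℕ) (w : Equiv.Perm (Fin n)) : ℕ :=
  sInf {m | ∃ l : List ℕ, IsWord n l ∧ wordProd n l = w ∧ l.length = m}

/-- Bruhat order: the partial order generated by `v < t * v` whenever `t` is a
transposition and `ℓ(v) < ℓ(t * v)`. -/
def BruhatLE (n : ℕ) : Equiv.Perm (Fin n) → Equiv.Perm (Fin n) → Prop :=
  Relation.ReflTransGen fun x y =>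
    (∃ t : Equiv.Perm (Fin n), t.IsSwap ∧ y = t * x) ∧ coxLen n x < coxLen n y

/-- The simple root `α_i = t_i - t_{i+1}` in `ℤ[t_1, …, t_n]` (defined as `0` if `i+1 ≥ n`). -/
noncomputable def simpleRoot (n : ℕ) (i : ℕ) : MvPolynomial (Fin n) ℤ :=
  if h : i + 1 < n then X ⟨i, Nat.lt_of_succ_lt h⟩ - X ⟨i + 1, h⟩ else 0

/-- The root `r_j = (s_{b_1} ⋯ s_{b_{j-1}}) · α_{b_j}` associated to position `j` of a word,
where `S_n` acts on polynomials by permuting variables. -/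
noncomputable def wordRoot (n : ℕ) (l : List ℕ) (j : Fin l.length) : MvPolynomial (Fin n) ℤ :=
  rename (⇑(wordProd n (l.take j))) (simpleRoot n (l.get j))

open scoped Classical in
/-- Billey's formula `σ_v(w)`, computed from the reduced word `l` of `w`: the sum over all
index sequences `j_1 < ⋯ < j_k` such that `(b_{j_1}, …, b_{j_k})` is a reduced word for `v`,
of the products `r_{j_1} ⋯ r_{j_k}`. -/
noncomputable def billey (n : ℕ) (v : Equiv.Perm (Fin n)) (l : List ℕ) :
    MvPolynomial (Fin n) ℤ :=
  ∑ J : Finset (Fin l.length),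
    if IsReducedWord n v ((J.sort (· ≤ ·)).map l.get) then ∏ j ∈ J, wordRoot n l j else 0

def invSet (n : ℕ) (π : Equiv.Perm (Fin n)) : Finset (Fin n × Fin n) :=
  Finset.univ.filter (fun p => p.1 < p.2 ∧ π⁻¹ p.2 < π⁻¹ p.1)

lemma mem_invSet {n : ℕ} {π : Equiv.Perm (Fin n)} {p : Fin n × Fin n} :
    p ∈ invSet n π ↔ p.1 < p.2 ∧ π⁻¹ p.2 < π⁻¹ p.1 := by
  simp [invSet]

lemma swap_lt_iff {n k : ℕ} (h : k + 1 < n) (x y : Fin n) :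
    Equiv.swap ⟨k, Nat.lt_of_succ_lt h⟩ ⟨k + 1, h⟩ x <
      Equiv.swap ⟨k, Nat.lt_of_succ_lt h⟩ ⟨k + 1, h⟩ y ↔
    (if (x = ⟨k, Nat.lt_of_succ_lt h⟩ ∧ y = ⟨k + 1, h⟩) ∨
        (x = ⟨k + 1, h⟩ ∧ y = ⟨k, Nat.lt_of_succ_lt h⟩) then y < x else x < y) := by
  have hx := x.isLt
  have hy := y.isLt
  simp only [Equiv.swap_apply_def, Fin.lt_def, Fin.ext_iff, Fin.val_mk]
  split_ifs <;> first | omega | (simp only [Fin.val_mk]; omega)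

lemma simpleRefl_eq {n k : ℕ} (h : k + 1 < n) :
    simpleRefl n k = Equiv.swap ⟨k, Nat.lt_of_succ_lt h⟩ ⟨k + 1, h⟩ := dif_pos h

lemma invSet_mul_of_lt {n k : ℕ} (h : k + 1 < n) (π : Equiv.Perm (Fin n))
    (hlt : π ⟨k, Nat.lt_of_succ_lt h⟩ < π ⟨k + 1, h⟩) :
    (π ⟨k, Nat.lt_of_succ_lt h⟩, π ⟨k + 1, h⟩) ∉ invSet n π ∧
    invSet n (π * simpleRefl n k) =
      insert (π ⟨k, Nat.lt_of_succ_lt h⟩, π ⟨k + 1, h⟩) (invSet n π) := by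
  set K : Fin n := ⟨k, Nat.lt_of_succ_lt h⟩ with hK
  set K1 : Fin n := ⟨k + 1, h⟩ with hK1
  have hKK : K < K1 := by simp [hK, hK1, Fin.lt_def]
  have hKne : K ≠ K1 := ne_of_lt hKK
  constructor
  · simp [mem_invSet, not_lt.mpr (le_of_lt hKK)]
  · ext ⟨x, y⟩
    simp only [mem_invSet, Finset.mem_insert, mul_inv_rev, Equiv.Perm.mul_apply,
      simpleRefl_eq h, Equiv.swap_inv, Prod.mk.injEq]
    rw [swap_lt_iff h]
    rw [show ((⟨k, Nat.lt_of_succ_lt h⟩ : Fin n) = K) from rfl,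
        show ((⟨k + 1, h⟩ : Fin n) = K1) from rfl]
    have e1 : ∀ z : Fin n, π⁻¹ z = K ↔ z = π K := fun z => Equiv.Perm.inv_eq_iff_eq
    have e2 : ∀ z : Fin n, π⁻¹ z = K1 ↔ z = π K1 := fun z => Equiv.Perm.inv_eq_iff_eq
    simp only [e1, e2]
    by_cases h1 : y = π K ∧ x = π K1
    · rw [if_pos (Or.inl h1)]
      obtain ⟨hy, hx⟩ := h1
      subst hy hx
      simp only [show ∀ z, π⁻¹ (π z) = z from fun z => π.symm_apply_apply z]
      constructor
      · rintro ⟨hxy, hcon⟩; exact absurd hcon (not_lt.mpr (le_of_lt hKK))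
      · rintro (⟨h1, h2⟩ | ⟨hxy, hcon⟩)
        · exact absurd (π.injective h1) hKne.symm
        · exact absurd hxy (not_lt.mpr (le_of_lt hlt))
    · by_cases h2 : y = π K1 ∧ x = π K
      · rw [if_pos (Or.inr h2)]
        obtain ⟨hy, hx⟩ := h2
        subst hy hx
        simp only [show ∀ z, π⁻¹ (π z) = z from fun z => π.symm_apply_apply z]
        simp [hlt, hKK]
      · rw [if_neg (by tauto)]
        constructor
        · rintro ⟨hxy, hc⟩; exact Or.inr ⟨hxy, hc⟩
        · rintro (⟨hx, hy⟩ | ⟨hxy, hc⟩)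
          · exact (h2 ⟨hy, hx⟩).elim
          · exact ⟨hxy, hc⟩

lemma simpleRefl_mul_self {n k : ℕ} : simpleRefl n k * simpleRefl n k = 1 := by
  unfold simpleRefl
  split_ifs with h
  · exact Equiv.swap_mul_self _ _
  · exact one_mul 1

lemma invSet_mul_of_gt {n k : ℕ} (h : k + 1 < n) (π : Equiv.Perm (Fin n))
    (hgt : π ⟨k + 1, h⟩ < π ⟨k, Nat.lt_of_succ_lt h⟩) :
    (π ⟨k + 1, h⟩, π ⟨k, Nat.lt_of_succ_lt h⟩) ∈ invSet n π ∧
    invSet n (π * simpleRefl n k) =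
      (invSet n π).erase (π ⟨k + 1, h⟩, π ⟨k, Nat.lt_of_succ_lt h⟩) := by
  set π' := π * simpleRefl n k with hπ'
  have hsK : (simpleRefl n k) ⟨k, Nat.lt_of_succ_lt h⟩ = ⟨k + 1, h⟩ := by
    rw [simpleRefl_eq h]; exact Equiv.swap_apply_left _ _
  have hsK1 : (simpleRefl n k) ⟨k + 1, h⟩ = ⟨k, Nat.lt_of_succ_lt h⟩ := by
    rw [simpleRefl_eq h]; exact Equiv.swap_apply_right _ _
  have hK : π' ⟨k, Nat.lt_of_succ_lt h⟩ = π ⟨k + 1, h⟩ := by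
    rw [hπ']; simp [Equiv.Perm.mul_apply, hsK]
  have hK1 : π' ⟨k + 1, h⟩ = π ⟨k, Nat.lt_of_succ_lt h⟩ := by
    rw [hπ']; simp [Equiv.Perm.mul_apply, hsK1]
  have hlt : π' ⟨k, Nat.lt_of_succ_lt h⟩ < π' ⟨k + 1, h⟩ := by rw [hK, hK1]; exact hgt
  obtain ⟨hnotmem, hins⟩ := invSet_mul_of_lt h π' hlt
  have hππ : π' * simpleRefl n k = π := by
    rw [hπ', mul_assoc, simpleRefl_mul_self, mul_one]
  rw [hK, hK1] at hins hnotmem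
  rw [hππ] at hins
  constructor
  · rw [hins]; exact Finset.mem_insert_self _ _
  · rw [hins, Finset.erase_insert hnotmem]

lemma wordProd_append (n : ℕ) (l₁ l₂ : List ℕ) :
    wordProd n (l₁ ++ l₂) = wordProd n l₁ * wordProd n l₂ := by
  simp [wordProd]

lemma wordProd_concat (n : ℕ) (l : List ℕ) (k : ℕ) :
    wordProd n (l ++ [k]) = wordProd n l * simpleRefl n k := by
  simp [wordProd]

/-- Each right multiplication by a simple reflection changes `invSet` card by at most one. -/
lemma card_invSet_mul_le {n k : ℕ} (h : k + 1 < n) (π : Equiv.Perm (Fin n)) :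
    (invSet n (π * simpleRefl n k)).card ≤ (invSet n π).card + 1 := by
  rcases lt_trichotomy (π ⟨k, Nat.lt_of_succ_lt h⟩) (π ⟨k + 1, h⟩) with hlt | heq | hgt
  · rw [(invSet_mul_of_lt h π hlt).2]
    exact le_trans (Finset.card_insert_le _ _) (by omega)
  · exact absurd (π.injective heq) (by simp [Fin.ext_iff])
  · rw [(invSet_mul_of_gt h π hgt).2]
    exact le_trans (Finset.card_erase_le) (by omega)

lemma card_invSet_wordProd_le (n : ℕ) (l : List ℕ) (hw : IsWord n l) :
    (invSet n (wordProd n l)).card ≤ l.length := by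
  induction l using List.reverseRecOn with
  | nil =>
    simp only [wordProd, List.map_nil, List.prod_nil, List.length_nil, Nat.le_zero,
      Finset.card_eq_zero]
    ext ⟨x, y⟩
    simp only [mem_invSet, Finset.notMem_empty, iff_false]
    rintro ⟨h1, h2⟩
    simp only [inv_one, Equiv.Perm.one_apply] at h2
    exact absurd h1 (not_lt.mpr (le_of_lt h2))
  | append_singleton l k ih =>
    have hk : k + 1 < n := hw k (by simp)
    have hl : IsWord n l := fun b hb => hw b (by simp [hb])
    rw [wordProd_concat]
    calc (invSet n (wordProd n l * simpleRefl n k)).card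
        ≤ (invSet n (wordProd n l)).card + 1 := card_invSet_mul_le hk _
      _ ≤ l.length + 1 := Nat.add_le_add_right (ih hl) 1
      _ = (l ++ [k]).length := by simp

lemma fin_le_apply {n : ℕ} (f : Fin n → Fin n) (h : StrictMono f) : ∀ i : Fin n, (i : ℕ) ≤ f i := by
  intro ⟨m, hm⟩
  induction m with
  | zero => exact Nat.zero_le _
  | succ m ih =>
    have hm' : m < n := by omega
    have h1 : (m : ℕ) ≤ f ⟨m, hm'⟩ := ih hm'
    have h2 : f ⟨m, hm'⟩ < f ⟨m + 1, hm⟩ := h (by simp [Fin.lt_def])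
    have h3 := Fin.lt_def.mp h2
    exact Nat.lt_of_le_of_lt h1 h3

/-- A strictly monotone permutation of `Fin n` is the identity. -/
lemma strictMono_eq_one {n : ℕ} (π : Equiv.Perm (Fin n)) (hmono : StrictMono π) : π = 1 := by
  have hmono' : StrictMono (π⁻¹ : Equiv.Perm (Fin n)) := by
    intro a b hab
    rcases lt_trichotomy (π⁻¹ a) (π⁻¹ b) with h | h | h
    · exact h
    · exact absurd (π⁻¹.injective h) (ne_of_lt hab)
    · have := hmono h
      simp only [show ∀ z, π (π⁻¹ z) = z from fun z => π.apply_symm_apply z] at this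
      exact absurd hab (not_lt.mpr (le_of_lt this))
  ext i
  have h1 : (i : ℕ) ≤ π i := fin_le_apply _ hmono i
  have h2 : i ≤ π⁻¹ i := Fin.le_def.mpr (fin_le_apply _ hmono' i)
  have h3 : π i ≤ i := by
    have := hmono.monotone h2
    simpa using this
  have := Fin.le_def.mp h3
  simp only [Equiv.Perm.one_apply]
  omega

/-- If `π` has no adjacent descent then `invSet π = ∅` and `π = 1`. -/
lemma eq_one_of_no_descent {n : ℕ} (π : Equiv.Perm (Fin n))
    (hd : ∀ k : ℕ, ∀ h : k + 1 < n, π ⟨k, Nat.lt_of_succ_lt h⟩ < π ⟨k + 1, h⟩) : π = 1 := by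
  apply strictMono_eq_one
  have step : ∀ d : ℕ, ∀ a b : Fin n, (b : ℕ) = a + (d + 1) → π a < π b := by
    intro d
    induction d with
    | zero =>
      intro a b hab
      have hb : (a : ℕ) + 1 < n := hab ▸ b.isLt
      have := hd a hb
      convert this <;> simp [Fin.ext_iff, hab]
    | succ d ih =>
      intro a b hab
      have hc : (a : ℕ) + (d + 1) < n := by have := b.isLt; omega
      have h1 : π a < π ⟨a + (d + 1), hc⟩ := ih a ⟨a + (d + 1), hc⟩ (by simp)
      have h2 : π ⟨(a : ℕ) + (d + 1), hc⟩ < π b := by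
        have hb : (a : ℕ) + (d + 1) + 1 < n := by have := b.isLt; omega
        have := hd ((a : ℕ) + (d + 1)) hb
        rw [show b = ⟨(a : ℕ) + (d + 1) + 1, hb⟩ from Fin.ext (show (b : ℕ) = (a : ℕ) + (d + 1) + 1 by omega)]; exact this
      exact lt_trans h1 h2
  intro a b hab
  have : (b : ℕ) = a + ((b - a - 1 : ℕ) + 1) := by
    have := Fin.lt_def.mp hab; omega
  exact step _ a b this

lemma invSet_one (n : ℕ) : invSet n (1 : Equiv.Perm (Fin n)) = ∅ := by
  ext ⟨x, y⟩
  simp only [mem_invSet, Finset.notMem_empty, iff_false, inv_one, Equiv.Perm.one_apply]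
  rintro ⟨h1, h2⟩
  exact absurd h1 (not_lt.mpr (le_of_lt h2))

/-- Every permutation has a word of length `card (invSet π)`. -/
lemma exists_word (n : ℕ) (π : Equiv.Perm (Fin n)) :
    ∃ l : List ℕ, IsWord n l ∧ wordProd n l = π ∧ l.length = (invSet n π).card := by
  generalize hc : (invSet n π).card = c
  induction c using Nat.strong_induction_on generalizing π with
  | _ c ih =>
    by_cases hd : ∀ k : ℕ, ∀ h : k + 1 < n, π ⟨k, Nat.lt_of_succ_lt h⟩ < π ⟨k + 1, h⟩
    · have hπ : π = 1 := eq_one_of_no_descent π hd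
      subst hπ
      refine ⟨[], fun b hb => absurd hb List.not_mem_nil, rfl, ?_⟩
      rw [invSet_one] at hc
      simp at hc ⊢
      omega
    · push_neg at hd
      obtain ⟨k, h, hk⟩ := hd
      have hne : π ⟨k, Nat.lt_of_succ_lt h⟩ ≠ π ⟨k + 1, h⟩ :=
        fun he => by simpa [Fin.ext_iff] using π.injective he
      have hgt : π ⟨k + 1, h⟩ < π ⟨k, Nat.lt_of_succ_lt h⟩ := lt_of_le_of_ne hk (fun he => hne he.symm)
      obtain ⟨hmem, herase⟩ := invSet_mul_of_gt h π hgt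
      have hcard : (invSet n (π * simpleRefl n k)).card = c - 1 := by
        rw [herase, Finset.card_erase_of_mem hmem, hc]
      have hcpos : 1 ≤ c := hc ▸ Finset.card_pos.mpr ⟨_, hmem⟩
      obtain ⟨l', hw', hp', hlen'⟩ := ih (c - 1) (by omega) (π * simpleRefl n k) hcard
      refine ⟨l' ++ [k], ?_, ?_, ?_⟩
      · intro b hb
        rcases List.mem_append.mp hb with hb | hb
        · exact hw' b hb
        · simp only [List.mem_singleton] at hb; subst hb; exact h
      · rw [wordProd_concat, hp', mul_assoc, simpleRefl_mul_self, mul_one]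
      · simp only [List.length_append, List.length_singleton, hlen', hc]
        omega

lemma invSet_revPerm (n : ℕ) :
    invSet n (Fin.revPerm : Equiv.Perm (Fin n)) =
      Finset.univ.filter (fun p : Fin n × Fin n => p.1 < p.2) := by
  ext ⟨x, y⟩
  have hinv : (Fin.revPerm : Equiv.Perm (Fin n))⁻¹ = Fin.revPerm := Fin.revPerm_symm
  simp only [mem_invSet, Finset.mem_filter, Finset.mem_univ, true_and, hinv,
    Fin.revPerm_apply, Fin.rev_lt_rev]
  exact ⟨fun h => h.1, fun h => ⟨h, h⟩⟩

/-- For the longest element `w₀` of `S_n` (the order-reversing permutation),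
`σ_{w₀}(w₀)` is the product of all positive roots `∏_{a < b} (t_a - t_b)`. -/
theorem billey_stmt_12 (n : ℕ) (hn : 1 ≤ n) (l : List ℕ)
    (hl : IsReducedWord n (Fin.revPerm : Equiv.Perm (Fin n)) l) :
    billey n (Fin.revPerm : Equiv.Perm (Fin n)) l =
      ∏ p ∈ Finset.univ.filter (fun p : Fin n × Fin n => p.1 < p.2),
        (MvPolynomial.X p.1 - MvPolynomial.X p.2) := by
  classical
  obtain ⟨hw, hprod, hmin⟩ := hl
  -- the number of inversions of the longest element equals the length of `l`
  obtain ⟨l₀, hw₀, hp₀, hlen₀⟩ := exists_word n (Fin.revPerm : Equiv.Perm (Fin n))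
  have hcard : (invSet n (Fin.revPerm : Equiv.Perm (Fin n))).card = l.length := by
    refine le_antisymm ?_ (hlen₀ ▸ hmin l₀ hw₀ hp₀)
    have := card_invSet_wordProd_le n l hw
    rwa [hprod] at this
  -- prefix permutations
  set π : ℕ → Equiv.Perm (Fin n) := fun j => wordProd n (l.take j) with hπ
  have hπm : π l.length = Fin.revPerm := by
    rw [hπ]; simp only [List.take_length]; exact hprod
  have hget : ∀ j : Fin l.length, l.get j + 1 < n := fun j => hw _ (List.get_mem l j)
  have hstep : ∀ j : Fin l.length, π ((j : ℕ) + 1) = π j * simpleRefl n (l.get j) := by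
    intro j
    have h1 : l.take ((j : ℕ) + 1) = l.take j ++ [l.get j] := by
      rw [← List.take_concat_get j.isLt, List.concat_eq_append,
        List.get_eq_getElem]
    rw [hπ]
    simp only [h1, wordProd_concat]
  have hub : ∀ j : ℕ, j ≤ l.length → (invSet n (π j)).card ≤ j := by
    intro j hj
    have hwt : IsWord n (l.take j) := fun b hb => hw b (List.mem_of_mem_take hb)
    have h2 := card_invSet_wordProd_le n (l.take j) hwt
    rwa [List.length_take, min_eq_left hj] at h2
  have hlb : ∀ d j : ℕ, j + d = l.length → j ≤ (invSet n (π j)).card := by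
    intro d
    induction d with
    | zero =>
      intro j hj
      have : j = l.length := by omega
      subst this
      rw [hπm, hcard]
    | succ d ih =>
      intro j hj
      have hj' : j < l.length := by omega
      have h1 : j + 1 ≤ (invSet n (π (j + 1))).card := ih (j + 1) (by omega)
      have h2 : (invSet n (π (j + 1))).card ≤ (invSet n (π j)).card + 1 := by
        rw [hstep ⟨j, hj'⟩]
        exact card_invSet_mul_le (hget ⟨j, hj'⟩) _
      omega
  have hcardj : ∀ j : ℕ, j ≤ l.length → (invSet n (π j)).card = j := fun j hj =>
    le_antisymm (hub j hj) (hlb (l.length - j) j (by omega))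
  -- the roots
  set u : Fin l.length → Fin n :=
    fun j => π j ⟨l.get j, Nat.lt_of_succ_lt (hget j)⟩ with hu
  set v : Fin l.length → Fin n := fun j => π j ⟨l.get j + 1, hget j⟩ with hv
  have huv : ∀ j : Fin l.length, u j < v j := by
    intro j
    rcases lt_trichotomy (u j) (v j) with h | h | h
    · exact h
    · exact absurd ((π j).injective h) (by simp [Fin.ext_iff])
    · exfalso
      have hdec := invSet_mul_of_gt (hget j) (π j) h
      have hc1 : (invSet n (π ((j : ℕ) + 1))).card = (invSet n (π j)).card - 1 := by
        rw [hstep j, hdec.2, Finset.card_erase_of_mem hdec.1]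
      rw [hcardj ((j : ℕ) + 1) j.isLt, hcardj (j : ℕ) (le_of_lt j.isLt)] at hc1
      omega
  have hins : ∀ j : Fin l.length,
      invSet n (π ((j : ℕ) + 1)) = insert (u j, v j) (invSet n (π j)) ∧
      (u j, v j) ∉ invSet n (π j) := by
    intro j
    have h := invSet_mul_of_lt (hget j) (π j) (huv j)
    rw [← hstep j] at h
    exact ⟨h.2, h.1⟩
  have hchain : ∀ d i : ℕ, i + d ≤ l.length → invSet n (π i) ⊆ invSet n (π (i + d)) := by
    intro d
    induction d with
    | zero => intro i _; exact subset_rfl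
    | succ d ih =>
      intro i hi
      have h1 := ih i (by omega)
      have hlt : i + d < l.length := by omega
      have h2 := (hins ⟨i + d, hlt⟩).1
      have h3 : invSet n (π (i + d)) ⊆ invSet n (π (i + d + 1)) := by
        rw [h2]; exact Finset.subset_insert _ _
      rw [show i + (d + 1) = i + d + 1 by omega]
      exact h1.trans h3
  have hPmem : ∀ j : Fin l.length, (u j, v j) ∈ invSet n (π ((j : ℕ) + 1)) := by
    intro j
    rw [(hins j).1]
    exact Finset.mem_insert_self _ _
  have hmemInv : ∀ j : Fin l.length,
      (u j, v j) ∈ invSet n (Fin.revPerm : Equiv.Perm (Fin n)) := by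
    intro j
    have hsub := hchain (l.length - ((j : ℕ) + 1)) ((j : ℕ) + 1) (by omega)
    rw [show (j : ℕ) + 1 + (l.length - ((j : ℕ) + 1)) = l.length by omega, hπm] at hsub
    exact hsub (hPmem j)
  have hPinj : Function.Injective (fun j : Fin l.length => (u j, v j)) := by
    have key : ∀ i j : Fin l.length, (i : ℕ) < (j : ℕ) → (u i, v i) ≠ (u j, v j) := by
      intro i j hij heq
      have hsub := hchain ((j : ℕ) - ((i : ℕ) + 1)) ((i : ℕ) + 1)
        (by have := j.isLt; omega)
      rw [show (i : ℕ) + 1 + ((j : ℕ) - ((i : ℕ) + 1)) = (j : ℕ) by omega] at hsub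
      exact (hins j).2 (heq ▸ hsub (hPmem i))
    intro i j heq
    by_contra hne
    rcases lt_or_gt_of_ne (fun h : (i : ℕ) = (j : ℕ) => hne (Fin.ext h)) with h | h
    · exact key i j h heq
    · exact key j i h heq.symm
  have himg : Finset.univ.image (fun j : Fin l.length => (u j, v j)) =
      invSet n (Fin.revPerm : Equiv.Perm (Fin n)) := by
    apply Finset.eq_of_subset_of_card_le
    · intro p hp
      obtain ⟨j, _, rfl⟩ := Finset.mem_image.mp hp
      exact hmemInv j
    · rw [hcard, Finset.card_image_of_injective _ hPinj, Finset.card_univ, Fintype.card_fin]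
  have hroot : ∀ j : Fin l.length, wordRoot n l j = X (u j) - X (v j) := by
    intro j
    unfold wordRoot
    rw [simpleRoot, dif_pos (hget j)]
    simp only [map_sub, rename_X]
    rfl
  -- reduce the Billey sum to the single term `J = univ`
  have hsort : ((Finset.univ : Finset (Fin l.length)).sort (· ≤ ·)).map l.get = l := by
    rw [Fin.sort_univ, List.map_get_finRange]
  unfold billey
  rw [Finset.sum_eq_single_of_mem (Finset.univ : Finset (Fin l.length))
    (Finset.mem_univ _) ?_]
  · rw [if_pos (by rw [hsort]; exact ⟨hw, hprod, hmin⟩)]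
    rw [← invSet_revPerm, ← himg, Finset.prod_image (fun i _ j _ h => hPinj h)]
    exact Finset.prod_congr rfl (fun j _ => hroot j)
  · intro J _ hJ
    rw [if_neg]
    intro hred
    apply hJ
    have hlen : ((J.sort (· ≤ ·)).map l.get).length = J.card := by
      rw [List.length_map, Finset.length_sort]
    have h1 : l.length ≤ J.card := hlen ▸ hmin _ hred.1 hred.2.1
    have h2 : J.card ≤ l.length := by
      have := Finset.card_le_univ J
      simpa using this
    have hJc : J.card = Fintype.card (Fin l.length) := by
      rw [Fintype.card_fin]; omega
    exact (Finset.card_eq_iff_eq_univ J).mp hJc
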